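/- arXiv:1906.07533 — 2 statements merged into one kernel-verified Lean document; each statement's English description precedes it below -/
import Mathlib

section
/- Let σ > 0, δ ∈ ℝ, r ∈ ℝ, set ρ = r − δ, and let P : (0,∞) → ℝ be twice continuously differentiable satisfying (1/2)σ²z²P''(z) + (1 − δz)P'(z) − ρP(z) = 0 for all z > 0. Define S'(z) = z^{2δ/σ²} e^{2/(σ²z)} and m'(z) = 2/(σ²z²S'(z)). Then for all z > 0, (d/dz)[(P(z) − zP'(z))/S'(z)] = (1 − rz) P(z) m'(z). -/
/-- Canonical form identity: `((P − zP')/S')' = (1 − rz) P m'` when `ρ = r − δ`. -/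
theorem stmt_4 (σ δ r : ℝ) (hσ : 0 < σ) (P : ℝ → ℝ)
    (hP : ContDiffOn ℝ 2 P (Set.Ioi 0))
    (hODE : ∀ z > 0,
      (1/2)*σ^2*z^2 * deriv (deriv P) z + (1 - δ*z) * deriv P z - (r - δ) * P z = 0) :
    ∀ z > 0,
      deriv (fun t : ℝ => (P t - t * deriv P t) / (t ^ (2*δ/σ^2) * Real.exp (2/(σ^2*t)))) z
        = (1 - r*z) * P z * (2 / (σ^2 * z^2 * (z ^ (2*δ/σ^2) * Real.exp (2/(σ^2*z))))) := by
  intro z hz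
  have hz0 : z ≠ 0 := ne_of_gt hz
  have hσ0 : σ ≠ 0 := ne_of_gt hσ
  have hopen : IsOpen (Set.Ioi (0:ℝ)) := isOpen_Ioi
  have hmem : Set.Ioi (0:ℝ) ∈ nhds z := hopen.mem_nhds hz
  set a := 2*δ/σ^2 with ha
  have hA : (0:ℝ) < z ^ a := Real.rpow_pos_of_pos hz a
  have hE : (0:ℝ) < Real.exp (2/(σ^2*z)) := Real.exp_pos _
  have hP1 : DifferentiableOn ℝ P (Set.Ioi 0) := hP.differentiableOn (by norm_num)
  have hP' : ContDiffOn ℝ 1 (deriv P) (Set.Ioi 0) :=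
    hP.deriv_of_isOpen (m := 1) hopen (by norm_num)
  have hd1 : HasDerivAt P (deriv P z) z :=
    ((hP1.differentiableAt hmem)).hasDerivAt
  have hd2 : HasDerivAt (deriv P) (deriv (deriv P) z) z :=
    (((hP'.differentiableOn one_ne_zero).differentiableAt hmem)).hasDerivAt
  have hN : HasDerivAt (fun t => P t - t * deriv P t)
      (deriv P z - (1 * deriv P z + z * deriv (deriv P) z)) z :=
    hd1.sub ((hasDerivAt_id z).mul hd2)
  have hlin : HasDerivAt (fun t : ℝ => σ^2*t) (σ^2) z := by
    simpa using (hasDerivAt_id z).const_mul (σ^2)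
  have hinv : HasDerivAt (fun t : ℝ => 2/(σ^2*t)) (-(2/(σ^2*z^2))) z := by
    have := show HasDerivAt (fun t : ℝ => 2/(σ^2*t)) _ z from (hasDerivAt_const z (2:ℝ)).div hlin (by positivity)
    convert this using 1
    field_simp
    ring
  have hExp : HasDerivAt (fun t : ℝ => Real.exp (2/(σ^2*t)))
      (Real.exp (2/(σ^2*z)) * (-(2/(σ^2*z^2)))) z := hinv.exp
  have hrpow : HasDerivAt (fun t : ℝ => t ^ a) (a * z ^ (a-1)) z :=
    Real.hasDerivAt_rpow_const (Or.inl hz0)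
  have hG : HasDerivAt (fun t : ℝ => t ^ a * Real.exp (2/(σ^2*t)))
      (a * z ^ (a-1) * Real.exp (2/(σ^2*z))
        + z ^ a * (Real.exp (2/(σ^2*z)) * (-(2/(σ^2*z^2))))) z := hrpow.mul hExp
  have hg0 : z ^ a * Real.exp (2/(σ^2*z)) ≠ 0 := by positivity
  have hQ := hN.div hG hg0
  rw [(show HasDerivAt (fun t => (P t - t * deriv P t) / (t ^ a * Real.exp (2/(σ^2*t)))) _ z from hQ).deriv]
  have hsub : z ^ (a-1) = z ^ a / z := by
    rw [Real.rpow_sub hz, Real.rpow_one]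
  rw [hsub]
  have hode := hODE z hz
  have hAne : z ^ a ≠ 0 := ne_of_gt hA
  have hEne : Real.exp (2/(σ^2*z)) ≠ 0 := ne_of_gt hE
  have hpp : deriv (deriv P) z
      = (2*((r-δ)*P z - (1-δ*z)*deriv P z)) / (σ^2*z^2) := by
    field_simp
    nlinarith [hode]
  rw [hpp]
  field_simp
  ring_nf
  field_simp
  have hσa : σ^2 * a = 2*δ := by rw [ha]; field_simp
  linear_combination (-(z * P z) + z^2 * deriv P z) * hσa
end

section
/- Let σ > 0, δ ∈ ℝ, r ∈ ℝ, K > 0, set ρ = r − δ, and let U : (0,∞) → ℝ be twice continuously differentiable satisfying (1/2)σ²z²U''(z) + (1 − δz)U'(z) − ρU(z) = 0 for all z in an interval I ⊆ (0,∞). Define S'(z) = z^{2δ/σ²}e^{2/(σ²z)} and m'(z) = 2/(σ²z²S'(z)). Then for all z ∈ I, (d/dz)[(U(z) − (z−K)U'(z))/S'(z)] = (1 + ρK − rz)·U(z)·m'(z). -/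
/-- Canonical form identity for the exchange option:
`((U − (z−K)U')/S')' = (1 + ρK − rz) U m'` where `ρ = r − δ`. -/
theorem stmt_12 (σ δ r K : ℝ) (hσ : 0 < σ) (hK : 0 < K) (U : ℝ → ℝ)
    (I : Set ℝ) (hI : I ⊆ Set.Ioi 0) (hIopen : IsOpen I)
    (hU : ContDiffOn ℝ 2 U (Set.Ioi 0))
    (hODE : ∀ z ∈ I,
      (1/2)*σ^2*z^2 * deriv (deriv U) z + (1 - δ*z) * deriv U z - (r - δ) * U z = 0) :
    ∀ z ∈ I,
      deriv (fun t : ℝ =>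
          (U t - (t - K) * deriv U t) / (t ^ (2*δ/σ^2) * Real.exp (2/(σ^2*t)))) z
        = (1 + (r - δ)*K - r*z) * U z
            * (2 / (σ^2 * z^2 * (z ^ (2*δ/σ^2) * Real.exp (2/(σ^2*z))))) := by
  intro z hz
  have hz0 : (0:ℝ) < z := hI hz
  have hzne : z ≠ 0 := ne_of_gt hz0
  have hσ2 : σ^2 ≠ 0 := pow_ne_zero _ hσ.ne'
  have hmem : Set.Ioi (0:ℝ) ∈ nhds z := isOpen_Ioi.mem_nhds hz0
  -- differentiability of U and deriv U at z
  have hdU : HasDerivAt U (deriv U z) z :=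
    (((hU.differentiableOn (by norm_num : (2:WithTop ℕ∞) ≠ 0)).differentiableAt hmem)).hasDerivAt
  have hU1 : ContDiffOn ℝ 1 (deriv U) (Set.Ioi 0) := by
    exact hU.deriv_of_isOpen isOpen_Ioi (by norm_num : (1:WithTop ℕ∞)+1 ≤ 2)
  have hdU' : HasDerivAt (deriv U) (deriv (deriv U) z) z :=
    ((hU1.differentiableOn (by norm_num : (1:WithTop ℕ∞) ≠ 0)).differentiableAt hmem).hasDerivAt
  -- numerator
  have hN : HasDerivAt (fun t => U t - (t - K) * deriv U t)
      (deriv U z - (1 * deriv U z + (z - K) * deriv (deriv U) z)) z :=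
    hdU.sub (((hasDerivAt_id z).sub_const K).mul hdU')
  -- denominator pieces
  have hP : HasDerivAt (fun t : ℝ => t ^ (2*δ/σ^2)) ((2*δ/σ^2) * z ^ (2*δ/σ^2 - 1)) z :=
    Real.hasDerivAt_rpow_const (Or.inl hzne)
  have hfun : ∀ t : ℝ, 2/(σ^2*t) = (2/σ^2) * t⁻¹ := by
    intro t; rw [← div_div, div_eq_mul_inv]
  have hE : HasDerivAt (fun t : ℝ => Real.exp (2/(σ^2*t)))
      (Real.exp (2/(σ^2*z)) * ((2/σ^2) * -(z^2)⁻¹)) z := by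
    have h := ((hasDerivAt_inv hzne).const_mul (2/σ^2)).exp
    simp only [hfun]
    exact h
  have hS : HasDerivAt (fun t : ℝ => t ^ (2*δ/σ^2) * Real.exp (2/(σ^2*t)))
      ((2*δ/σ^2) * z ^ (2*δ/σ^2 - 1) * Real.exp (2/(σ^2*z))
        + z ^ (2*δ/σ^2) * (Real.exp (2/(σ^2*z)) * ((2/σ^2) * -(z^2)⁻¹))) z :=
    hP.mul hE
  have hPpos : (0:ℝ) < z ^ (2*δ/σ^2) := Real.rpow_pos_of_pos hz0 _
  have hEpos : (0:ℝ) < Real.exp (2/(σ^2*z)) := Real.exp_pos _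
  have hSne : z ^ (2*δ/σ^2) * Real.exp (2/(σ^2*z)) ≠ 0 :=
    ne_of_gt (mul_pos hPpos hEpos)
  have hQ : deriv (fun t : ℝ =>
          (U t - (t - K) * deriv U t) / (t ^ (2*δ/σ^2) * Real.exp (2/(σ^2*t)))) z = _ :=
    (hN.div hS hSne).deriv
  rw [hQ]
  -- rewrite second derivative from the ODE
  have hdd : deriv (deriv U) z
      = (2/(σ^2*z^2)) * ((r - δ) * U z - (1 - δ*z) * deriv U z) := by
    have h := hODE z hz
    field_simp
    linarith [h]
  rw [hdd, Real.rpow_sub_one hzne]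
  have hPne : z ^ (2*δ/σ^2) ≠ 0 := ne_of_gt hPpos
  have hEne : Real.exp (2/(σ^2*z)) ≠ 0 := ne_of_gt hEpos
  field_simp
  ring
end
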